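/- Let A be a unital C*-algebra with 1 ≠ 0. Then the following are equivalent: (i) for every x ∈ A with x ≠ 0 there exist a, b ∈ A with a x b = 1; (ii) for every positive x ∈ A with x ≠ 0 there exists b ∈ A with b* x b = 1; (iii) for every positive x ∈ A with x ≠ 0 there exists b ∈ A with ‖b* x b − 1‖ < 1. -/

import Mathlib

open CFC

/-- For a unital C*-algebra `A` with `1 ≠ 0`, the following are equivalent:
(i) for every nonzero `x` there are `a, b` with `a x b = 1` (pure infiniteness and simplicity);
(ii) for every nonzero positive `x` there is `b` with `b* x b = 1`;
(iii) for every nonzero positive `x` there is `b` with `‖b* x b − 1‖ < 1`. -/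
theorem purelyInfinite_simple_tfae
    {A : Type*} [NormedRing A] [StarRing A] [CStarRing A] [CompleteSpace A]
    [NormedAlgebra ℂ A] [StarModule ℂ A] [PartialOrder A] [StarOrderedRing A]
    [Nontrivial A] :
    List.TFAE
      [∀ x : A, x ≠ 0 → ∃ a b : A, a * x * b = 1,
       ∀ x : A, 0 ≤ x → x ≠ 0 → ∃ b : A, star b * x * b = 1,
       ∀ x : A, 0 ≤ x → x ≠ 0 → ∃ b : A, ‖star b * x * b - 1‖ < 1] := by
  letI : CStarAlgebra A := { }
  tfae_have 1 → 2 := by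
    intro h x hx hx0
    obtain ⟨a, b, hab⟩ := h x hx0
    have hxsa : IsSelfAdjoint x := .of_nonneg hx
    set c : A := star b * x * b with hc
    have hcpos : 0 ≤ c := star_left_conjugate_nonneg hx b
    -- step 1 : 1 = star (x*b) * (star a * a) * (x*b)
    have h1 : (1 : A) = star (x * b) * (star a * a) * (x * b) := by
      have := congrArg (fun t => star t * t) hab
      simp only [star_one, one_mul] at this
      rw [← this]
      simp only [star_mul, hxsa.star_eq]
      noncomm_ring
    have h2 : star (x * b) * (star a * a) * (x * b)
        ≤ ‖star a * a‖ • (star (x * b) * (x * b)) :=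
      CStarAlgebra.star_left_conjugate_le_norm_smul (IsSelfAdjoint.star_mul_self a)
    obtain ⟨s, hssa, hs⟩ : ∃ s : A, IsSelfAdjoint s ∧ s * s = x :=
      ⟨sqrt x, IsSelfAdjoint.of_nonneg (sqrt_nonneg (a := x)), sqrt_mul_sqrt_self x hx⟩
    have hxx : s * x * s = x * x := by rw [← hs]; noncomm_ring
    have h3 : star (x * b) * (x * b) = star (s * b) * x * (s * b) := by
      simp only [star_mul, hxsa.star_eq, hssa.star_eq]
      calc star b * x * (x * b) = star b * (x * x) * b := by noncomm_ring
        _ = star b * (s * x * s) * b := by rw [hxx]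
        _ = star b * s * x * (s * b) := by noncomm_ring
    have h4 : star (s * b) * x * (s * b)
        ≤ ‖x‖ • (star (s * b) * (s * b)) :=
      CStarAlgebra.star_left_conjugate_le_norm_smul hxsa
    have h5 : star (s * b) * (s * b) = c := by
      simp only [star_mul, hssa.star_eq, hc]
      calc star b * s * (s * b) = star b * (s * s) * b := by noncomm_ring
        _ = star b * x * b := by rw [hs]
    -- combine : 1 ≤ k • c
    set k : ℝ := ‖star a * a‖ * ‖x‖ with hk
    have hkey : (1 : A) ≤ k • c := by
      calc (1 : A) = star (x * b) * (star a * a) * (x * b) := h1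
        _ ≤ ‖star a * a‖ • (star (x * b) * (x * b)) := h2
        _ = ‖star a * a‖ • (star (s * b) * x * (s * b)) := by rw [h3]
        _ ≤ ‖star a * a‖ • (‖x‖ • (star (s * b) * (s * b))) :=
            smul_le_smul_of_nonneg_left h4 (norm_nonneg _)
        _ = k • c := by rw [h5, smul_smul]
    have hk0 : 0 < k := by
      have ha0 : a ≠ 0 := by
        rintro rfl
        rw [zero_mul, zero_mul] at hab
        exact one_ne_zero hab.symm
      have : star a * a ≠ 0 := (CStarRing.star_mul_self_eq_zero_iff a).not.mpr ha0
      have h1' : 0 < ‖star a * a‖ := norm_pos_iff.mpr this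
      have h2' : 0 < ‖x‖ := norm_pos_iff.mpr hx0
      positivity
    -- c is invertible
    have hle : algebraMap ℝ A k⁻¹ ≤ c := by
      rw [Algebra.algebraMap_eq_smul_one]
      calc k⁻¹ • (1:A) ≤ k⁻¹ • (k • c) :=
            smul_le_smul_of_nonneg_left hkey (by positivity)
        _ = c := by rw [smul_smul, inv_mul_cancel₀ hk0.ne', one_smul]
    have hum : IsUnit (algebraMap ℝ A k⁻¹) :=
      (isUnit_iff_ne_zero.mpr (by positivity)).map (algebraMap ℝ A)
    have halg : (0:A) ≤ algebraMap ℝ A k⁻¹ := by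
      rw [Algebra.algebraMap_eq_smul_one]
      calc (0:A) = k⁻¹ • (0:A) := by simp
        _ ≤ k⁻¹ • (1:A) := smul_le_smul_of_nonneg_left (by simpa using star_mul_self_nonneg (1:A)) (by positivity)
    have hcu : IsUnit c := CStarAlgebra.isUnit_of_le _ hle ⟨halg, hum⟩
    -- conjugate by c ^ (-(1/2))
    refine ⟨b * c ^ (-(1 / 2) : ℝ), ?_⟩
    have hrsa : IsSelfAdjoint (c ^ (-(1 / 2) : ℝ)) :=
      IsSelfAdjoint.of_nonneg rpow_nonneg
    calc star (b * c ^ (-(1 / 2) : ℝ)) * x * (b * c ^ (-(1 / 2) : ℝ))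
        = c ^ (-(1 / 2) : ℝ) * (star b * x * b) * c ^ (-(1 / 2) : ℝ) := by
          simp only [star_mul, hrsa.star_eq]; noncomm_ring
      _ = 1 := by rw [← hc]; exact CFC.conjugate_rpow_neg_one_half c ⟨hcpos, hcu⟩
  tfae_have 2 → 3 := by
    intro h x hx hx0
    obtain ⟨b, hb⟩ := h x hx hx0
    exact ⟨b, by simp [hb]⟩
  tfae_have 3 → 1 := by
    intro h x hx0
    obtain ⟨b, hb⟩ := h (star x * x) (star_mul_self_nonneg x)
      (by simpa using (CStarRing.star_mul_self_eq_zero_iff x).not.mpr hx0)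
    set c : A := star b * (star x * x) * b with hc
    have hu : ‖1 - c‖ < 1 := by rwa [norm_sub_rev] at hb
    set u : Aˣ := Units.oneSub (1 - c) hu with hu'
    have hcu : (u : A) = c := by simp [hu', Units.val_oneSub]
    refine ⟨(↑u⁻¹ : A) * star b * star x, b, ?_⟩
    calc (↑u⁻¹ : A) * star b * star x * x * b
        = (↑u⁻¹ : A) * c := by rw [hc]; noncomm_ring
      _ = 1 := by rw [← hcu, Units.inv_mul]
  tfae_finish
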